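/- Let ρ and σ be density operators on A, each held with probability 1/2, and consider distinguishing them by a two-outcome POVM {M_ρ, M_σ} with 0 ≤ M_ρ ≤ I and M_σ = I − M_ρ. The optimal success probability, (1/2)tr[M_ρ ρ] + (1/2)tr[M_σ σ] maximized over all such POVMs, equals 1/2 + (1/4)‖ρ − σ‖₁ (Helstrom's theorem). -/

import Mathlib

open Matrix Kronecker
open scoped ComplexOrder

noncomputable def traceNorm {n m : Type*} [Fintype n] [Fintype m] [DecidableEq m]
    (M : Matrix n m ℂ) : ℝ :=
  (((Matrix.posSemidef_conjTranspose_mul_self M).1.eigenvectorUnitary.1 *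
      diagonal (((↑) : ℝ → ℂ) ∘ (√·) ∘ (Matrix.posSemidef_conjTranspose_mul_self M).1.eigenvalues) *
      (star (Matrix.posSemidef_conjTranspose_mul_self M).1.eigenvectorUnitary : Matrix m m ℂ)).trace).re

noncomputable def ptraceFst {a b : Type*} [Fintype a]
    (M : Matrix (a × b) (a × b) ℂ) : Matrix b b ℂ :=
  Matrix.of fun i j => ∑ k, M (k, i) (k, j)

noncomputable def ptraceSnd {a b : Type*} [Fintype b]
    (M : Matrix (a × b) (a × b) ℂ) : Matrix a a ℂ :=
  Matrix.of fun i j => ∑ k, M (i, k) (j, k)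

section helstromAux

variable {n : Type*} [Fintype n] [DecidableEq n]

lemma psd_diag_re_nonneg {A : Matrix n n ℂ} (hA : A.PosSemidef) (i : n) :
    0 ≤ (A i i).re := by
  have h := hA.diag_nonneg (i := i)
  simpa using (Complex.le_def.mp h).1

lemma psd_trace_re_nonneg {A : Matrix n n ℂ} (hA : A.PosSemidef) :
    0 ≤ (A.trace).re := by
  rw [Matrix.trace, Complex.re_sum]
  exact Finset.sum_nonneg fun i _ => psd_diag_re_nonneg hA i

lemma psd_trace_mul_re_nonneg {A B : Matrix n n ℂ} (hA : A.PosSemidef) (hB : B.PosSemidef) :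
    0 ≤ ((A * B).trace).re := by
  obtain ⟨C, hC⟩ : ∃ C : Matrix n n ℂ, A = Cᴴ * C := by
    open scoped MatrixOrder Matrix.Norms.L2Operator in
    exact CStarAlgebra.nonneg_iff_eq_star_mul_self.mp hA.nonneg
  obtain ⟨D, hD⟩ : ∃ D : Matrix n n ℂ, B = Dᴴ * D := by
    open scoped MatrixOrder Matrix.Norms.L2Operator in
    exact CStarAlgebra.nonneg_iff_eq_star_mul_self.mp hB.nonneg
  have key : (A * B).trace = ((D * Cᴴ)ᴴ * (D * Cᴴ)).trace := by
    rw [hC, hD, Matrix.conjTranspose_mul, Matrix.conjTranspose_conjTranspose]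
    rw [Matrix.mul_assoc Cᴴ, Matrix.trace_mul_comm]
    simp only [Matrix.mul_assoc]
  rw [key]
  exact psd_trace_re_nonneg (Matrix.posSemidef_conjTranspose_mul_self _)

end helstromAux

/-- Helstrom's theorem: the optimal success probability of distinguishing `ρ` and `σ`
(each with prior 1/2) by a two-outcome POVM is `1/2 + (1/4)‖ρ − σ‖₁`. -/
theorem helstrom
    {n : Type*} [Fintype n] [DecidableEq n]
    (ρ σ : Matrix n n ℂ)
    (hρ : ρ.PosSemidef) (hρ1 : ρ.trace = 1)
    (hσ : σ.PosSemidef) (hσ1 : σ.trace = 1) :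
    IsGreatest { p : ℝ | ∃ Mρ : Matrix n n ℂ, Mρ.PosSemidef ∧ (1 - Mρ).PosSemidef ∧
        p = (1/2) * ((Mρ * ρ).trace).re + (1/2) * (((1 - Mρ) * σ).trace).re }
      (1/2 + (1/4) * traceNorm (ρ - σ)) := by
  set Δ : Matrix n n ℂ := ρ - σ with hΔdef
  have hΔ : Δ.IsHermitian := hρ.1.sub hσ.1
  set U : Matrix n n ℂ := (hΔ.eigenvectorUnitary : Matrix n n ℂ) with hUdef
  set lam : n → ℝ := hΔ.eigenvalues with hlamdef
  have hUU : star U * U = 1 := Matrix.mem_unitaryGroup_iff'.mp hΔ.eigenvectorUnitary.2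
  have hUU' : U * star U = 1 := Matrix.mem_unitaryGroup_iff.mp hΔ.eigenvectorUnitary.2
  set C : (n → ℝ) → Matrix n n ℂ :=
    fun f => U * Matrix.diagonal (fun i => (f i : ℂ)) * star U with hCdef
  -- basic properties of C
  have hCmul : ∀ f g, C f * C g = C (fun i => f i * g i) := by
    intro f g
    simp only [hCdef, Matrix.mul_assoc]
    rw [← Matrix.mul_assoc (star U), hUU, Matrix.one_mul,
      ← Matrix.mul_assoc (Matrix.diagonal _), Matrix.diagonal_mul_diagonal]
    congr 2
    ext i
    push_cast
    ring
  have hCtr : ∀ f, ((C f).trace).re = ∑ i, f i := by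
    intro f
    simp only [hCdef]
    rw [Matrix.trace_mul_cycle, hUU, Matrix.one_mul, Matrix.trace_diagonal]
    rw [Complex.re_sum]
    simp
  have hCpsd : ∀ f, (∀ i, 0 ≤ f i) → (C f).PosSemidef := by
    intro f hf
    have hd : (Matrix.diagonal (fun i => (f i : ℂ))).PosSemidef := by
      rw [Matrix.posSemidef_diagonal_iff]
      intro i
      exact_mod_cast Complex.zero_le_real.mpr (hf i)
    have := hd.mul_mul_conjTranspose_same U
    rwa [← Matrix.star_eq_conjTranspose] at this
  have hCsub : ∀ f g, C f - C g = C (fun i => f i - g i) := by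
    intro f g
    simp only [hCdef]
    rw [← Matrix.sub_mul, ← Matrix.mul_sub, Matrix.diagonal_sub]
    congr 2
    ext i
    push_cast
    ring
  have hC1 : C (fun _ => 1) = 1 := by
    simp only [hCdef]
    have : (Matrix.diagonal (fun _ : n => ((1:ℝ) : ℂ))) = 1 := by
      simp [Matrix.diagonal_one]
    rw [this, Matrix.mul_one, hUU']
  have hΔC : Δ = C lam := by
    simpa only [hCdef, Unitary.conjStarAlgAut_apply, Function.comp_def, RCLike.ofReal_eq_complex_ofReal] using hΔ.spectral_theorem
  -- trace norm computation
  have habs : (C (fun i => |lam i|)).PosSemidef := hCpsd _ fun i => abs_nonneg _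
  have hsq : (C fun i => |lam i|) ^ 2 = Δᴴ * Δ := by
    have habs2 : (fun i => |lam i| * |lam i|) = fun i => lam i * lam i := by
      funext i
      rw [abs_mul_abs_self]
    rw [sq, hCmul, show Δᴴ = Δ from hΔ, hΔC, hCmul, habs2]
  have hsqrt : C (fun i => |lam i|) = (Matrix.posSemidef_conjTranspose_mul_self Δ).1.eigenvectorUnitary.1 *
      diagonal (((↑) : ℝ → ℂ) ∘ (√·) ∘ (Matrix.posSemidef_conjTranspose_mul_self Δ).1.eigenvalues) *
      (star (Matrix.posSemidef_conjTranspose_mul_self Δ).1.eigenvectorUnitary : Matrix n n ℂ) := by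
    open scoped MatrixOrder in
    have hH := Matrix.posSemidef_conjTranspose_mul_self Δ
    open scoped MatrixOrder in
    have e : CFC.sqrt (Δᴴ * Δ) = C (fun i => |lam i|) :=
      CFC.sqrt_unique (by rw [← sq]; exact hsq) habs.nonneg
    open scoped MatrixOrder in
    rw [← e, CFC.sqrt_eq_cfc, cfc_nnreal_eq_real _ (Δᴴ * Δ) hH.nonneg, hH.1.cfc_eq]
    simp only [IsHermitian.cfc, Unitary.conjStarAlgAut_apply]
    congr 2
    funext i
    congr 1
    congr 1
    funext k
    simp [Real.coe_toNNReal', hH.eigenvalues_nonneg]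
  have hTN : traceNorm Δ = ∑ i, |lam i| := by
    rw [traceNorm, ← hsqrt, hCtr]
  -- sum of eigenvalues is zero
  have hsum0 : ∑ i, lam i = 0 := by
    have h1 : (Δ.trace).re = 0 := by
      rw [hΔdef, Matrix.trace_sub, hρ1, hσ1]
      simp
    rw [hΔC, hCtr] at h1
    exact h1
  have hsumpos : ∑ i, max (lam i) 0 = (1/2) * ∑ i, |lam i| := by
    have h1 : ∑ i, (max (lam i) 0 - max (-lam i) 0) = 0 := by
      simp_rw [max_zero_sub_max_neg_zero_eq_self]
      exact hsum0
    have h2 : ∑ i, (max (lam i) 0 + max (-lam i) 0) = ∑ i, |lam i| := by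
      simp_rw [max_zero_add_max_neg_zero_eq_abs_self]
    rw [Finset.sum_sub_distrib] at h1
    rw [Finset.sum_add_distrib] at h2
    linarith
  -- general value identity
  have hval : ∀ M : Matrix n n ℂ,
      (1/2) * ((M * ρ).trace).re + (1/2) * (((1 - M) * σ).trace).re
        = 1/2 + (1/2) * ((M * Δ).trace).re := by
    intro M
    have h1 : (1 - M) * σ = σ - M * σ := by rw [Matrix.sub_mul, Matrix.one_mul]
    have h2 : M * Δ = M * ρ - M * σ := by rw [hΔdef, Matrix.mul_sub]
    rw [h1, h2, Matrix.trace_sub, Matrix.trace_sub, hσ1]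
    simp only [Complex.sub_re, Complex.one_re]
    ring
  -- the positive part
  set pos : n → ℝ := fun i => max (lam i) 0 with hposdef
  set neg : n → ℝ := fun i => max (-lam i) 0 with hnegdef
  have hPdecomp : Δ = C pos - C neg := by
    have hfun : (fun i => pos i - neg i) = lam := by
      funext i
      exact max_zero_sub_max_neg_zero_eq_self (lam i)
    rw [hCsub, hfun, hΔC]
  have hPpsd : (C pos).PosSemidef := hCpsd _ fun i => le_max_right _ _
  have hNpsd : (C neg).PosSemidef := hCpsd _ fun i => le_max_right _ _
  constructor
  · -- membership: optimal measurement
    set f : n → ℝ := fun i => if 0 < lam i then 1 else 0 with hfdef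
    refine ⟨C f, hCpsd _ fun i => by simp only [hfdef]; split <;> norm_num, ?_, ?_⟩
    · have h1f : (1 : Matrix n n ℂ) - C f = C (fun i => 1 - f i) := by
        rw [← hC1, hCsub]
      rw [h1f]
      refine hCpsd _ fun i => ?_
      simp only [hfdef]
      split <;> norm_num
    · rw [hval (C f)]
      have htr : ((C f * Δ).trace).re = ∑ i, pos i := by
        rw [hΔC, hCmul, hCtr]
        refine Finset.sum_congr rfl fun i _ => ?_
        simp only [hfdef, hposdef]
        by_cases h : 0 < lam i
        · simp [h, max_eq_left h.le]
        · simp [h, max_eq_right (not_lt.mp h)]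
      rw [htr, hsumpos, hTN]
      ring
  · -- upper bound
    rintro p ⟨M, hM, hM1, rfl⟩
    rw [hval M, hTN]
    have hb1 : ((M * Δ).trace).re ≤ ((M * C pos).trace).re := by
      have : M * Δ = M * C pos - M * C neg := by rw [hPdecomp, Matrix.mul_sub]
      rw [this, Matrix.trace_sub, Complex.sub_re]
      have := psd_trace_mul_re_nonneg hM hNpsd
      linarith
    have hb2 : ((M * C pos).trace).re ≤ ((C pos).trace).re := by
      have := psd_trace_mul_re_nonneg hM1 hPpsd
      calc ((M * C pos).trace).re
          ≤ ((M * C pos).trace).re + (((1 - M) * C pos).trace).re := by linarith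
        _ = ((C pos).trace).re := by
            rw [← Complex.add_re, ← Matrix.trace_add]
            congr 2
            rw [← Matrix.add_mul]
            simp
    have hb3 : ((C pos).trace).re = (1/2) * ∑ i, |lam i| := by
      rw [hCtr]; exact hsumpos
    linarith
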